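/- arXiv:2601.09955 — 4 statements merged into one kernel-verified Lean document; each statement's English description precedes it below -/
import Mathlib

section
/- The matrices in the family {A_g : g ∈ C} ∪ {B_g : g ∈ C} pairwise commute if and only if n ≤ 2. Equivalently, there exist two matrices in this family that do not commute if and only if n ≥ 3 (i.e. the Tatra scheme is noncommutative exactly when n ≥ 3). -/
open Classical Matrix

namespace Tatra

variable (F : Type) [Field F] [Fintype F] (K : Subgroup Fˣ)

/-- The equivalence relation on nonzero vectors of `F²` identifying `v` with `x • v` for `x ∈ K`. -/
def ksetoid : Setoid {v : Fin 2 → F // v ≠ 0} where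
  r u v := ∃ x : Fˣ, x ∈ K ∧ ((x : F) • u.1 = v.1)
  iseqv := by
    refine ⟨fun u => ⟨1, K.one_mem, by simp⟩, ?_, ?_⟩
    · rintro u v ⟨x, hx, h⟩
      refine ⟨x⁻¹, K.inv_mem hx, ?_⟩
      rw [← h, smul_smul, Units.val_inv_eq_inv_val, inv_mul_cancel₀ x.ne_zero, one_smul]
    · rintro u v w ⟨x, hx, h1⟩ ⟨y, hy, h2⟩
      refine ⟨y * x, K.mul_mem hy hx, ?_⟩
      rw [Units.val_mul, mul_smul, h1, h2]

/-- The point set `Ω` of the Tatra scheme. -/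
abbrev Om := Quotient (ksetoid F K)

/-- The cyclic group `C = Fˣ/K`. -/
abbrev CC := Fˣ ⧸ K

noncomputable instance : Fintype (Om F K) := Fintype.ofFinite _

noncomputable instance : Fintype (CC F K) := @Fintype.ofFinite _ (Quotient.finite _)

/-- The relation `r_g = {(α, β) : β = gα}` on `Ω`. -/
def rrel (g : CC F K) : Set (Om F K × Om F K) :=
  {p | ∃ (u v : {w : Fin 2 → F // w ≠ 0}) (y : Fˣ),
    Quotient.mk (ksetoid F K) u = p.1 ∧ Quotient.mk (ksetoid F K) v = p.2 ∧
    (QuotientGroup.mk y : CC F K) = g ∧ ((y : F) • u.1 = v.1)}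

/-- `det(u,v) = u₁v₂ - u₂v₁`. -/
def dt (u v : {w : Fin 2 → F // w ≠ 0}) : F := u.1 0 * v.1 1 - u.1 1 * v.1 0

/-- The relation `s_g = {(Ku, Kv) : det(u,v) ∈ g}` on `Ω`. -/
def srel (g : CC F K) : Set (Om F K × Om F K) :=
  {p | ∃ (u v : {w : Fin 2 → F // w ≠ 0}) (y : Fˣ),
    Quotient.mk (ksetoid F K) u = p.1 ∧ Quotient.mk (ksetoid F K) v = p.2 ∧
    (QuotientGroup.mk y : CC F K) = g ∧ (y : F) = dt F u v}

/-- Adjacency matrix `A_g` of `r_g`. -/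
noncomputable def Amat (g : CC F K) : Matrix (Om F K) (Om F K) ℤ :=
  Matrix.of fun α β => if (α, β) ∈ rrel F K g then 1 else 0

/-- Adjacency matrix `B_g` of `s_g`. -/
noncomputable def Bmat (g : CC F K) : Matrix (Om F K) (Om F K) ℤ :=
  Matrix.of fun α β => if (α, β) ∈ srel F K g then 1 else 0

/-- The all-ones matrix `J`. -/
noncomputable def Jmat : Matrix (Om F K) (Om F K) ℤ := Matrix.of fun _ _ => 1

/-- `A_C = Σ_{g ∈ C} A_g`. -/
noncomputable def AC : Matrix (Om F K) (Om F K) ℤ := ∑ g : CC F K, Amat F K g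

/-- Sum `A_X = Σ_{g ∈ X} A_g` for `X ⊆ C`. -/
noncomputable def AmatX (X : Set (CC F K)) : Matrix (Om F K) (Om F K) ℤ :=
  ∑ g ∈ (Set.toFinite X).toFinset, Amat F K g

/-- Sum `B_Y = Σ_{g ∈ Y} B_g` for `Y ⊆ C`. -/
noncomputable def BmatX (Y : Set (CC F K)) : Matrix (Om F K) (Om F K) ℤ :=
  ∑ g ∈ (Set.toFinite Y).toFinset, Bmat F K g

/-- `r_X = ∪_{g ∈ X} r_g`. -/
def rrelX (X : Set (CC F K)) : Set (Om F K × Om F K) := ⋃ g ∈ X, rrel F K g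

/-- `s_Y = ∪_{g ∈ Y} s_g`. -/
def srelX (Y : Set (CC F K)) : Set (Om F K × Om F K) := ⋃ g ∈ Y, srel F K g

/-- The line `Cα` through a point `α ∈ Ω`. -/
def line (α : Om F K) : Set (Om F K) := {β | ∃ g : CC F K, (α, β) ∈ rrel F K g}

/-- The image `t^f` of a binary relation `t` under a permutation `f` of `Ω`. -/
def relImage (f : Equiv.Perm (Om F K)) (t : Set (Om F K × Om F K)) : Set (Om F K × Om F K) :=
  (fun p => (f p.1, f p.2)) '' t

/-- `f` is the permutation `f_{T,σ} : Kv ↦ K(T·v^σ)` of `Ω`. -/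
def Implements (T : Matrix (Fin 2) (Fin 2) F) (σ : F ≃+* F) (f : Equiv.Perm (Om F K)) : Prop :=
  ∀ u v : {w : Fin 2 → F // w ≠ 0}, T.mulVec (fun i => σ (u.1 i)) = v.1 →
    f (Quotient.mk (ksetoid F K) u) = Quotient.mk (ksetoid F K) v

end Tatra

namespace Tatra

variable (F : Type) [Field F] [Fintype F] (K : Subgroup Fˣ)

/-- Scalar multiplication of a unit on a nonzero vector. -/
def usmul (y : Fˣ) (u : {w : Fin 2 → F // w ≠ 0}) : {w : Fin 2 → F // w ≠ 0} :=
  ⟨(y : F) • u.1, smul_ne_zero y.ne_zero u.2⟩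

lemma usmul_mul (y z : Fˣ) (u : {w : Fin 2 → F // w ≠ 0}) :
    usmul F (y * z) u = usmul F y (usmul F z u) := by
  simp [usmul, smul_smul]

/-- The action of `C` on `Ω`. -/
def act (g : CC F K) (α : Om F K) : Om F K :=
  Quotient.liftOn₂ g α (fun y u => Quotient.mk (ksetoid F K) (usmul F y u)) (by
    rintro y u y' u' hy hu
    obtain ⟨x, hxK, hx⟩ := hu
    have hy' : y⁻¹ * y' ∈ K := (QuotientGroup.leftRel_apply).mp hy
    apply Quotient.sound
    refine ⟨(y⁻¹ * y') * x, K.mul_mem hy' hxK, ?_⟩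
    show (((y⁻¹ * y' * x : Fˣ) : F)) • ((y : F) • u.1) = (y' : F) • u'.1
    rw [← hx, smul_smul, smul_smul, ← Units.val_mul, ← Units.val_mul]
    have he : (y⁻¹ * y' * x) * y = y' * x := by
      rw [mul_comm _ y, ← mul_assoc, ← mul_assoc, mul_inv_cancel, one_mul]
    rw [he])

lemma act_mk (y : Fˣ) (u : {w : Fin 2 → F // w ≠ 0}) :
    act F K (QuotientGroup.mk y) (Quotient.mk (ksetoid F K) u)
      = Quotient.mk (ksetoid F K) (usmul F y u) := rfl

lemma act_act (g h : CC F K) (α : Om F K) : act F K g (act F K h α) = act F K (g * h) α := by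
  obtain ⟨y, rfl⟩ := QuotientGroup.mk_surjective g
  obtain ⟨z, rfl⟩ := QuotientGroup.mk_surjective h
  obtain ⟨u, rfl⟩ := Quotient.exists_rep α
  show act F K _ (Quotient.mk _ (usmul F z u)) = _
  rw [← QuotientGroup.mk_mul, act_mk, act_mk, usmul_mul]

lemma act_one (α : Om F K) : act F K 1 α = α := by
  obtain ⟨u, rfl⟩ := Quotient.exists_rep α
  show Quotient.mk _ (usmul F 1 u) = _
  congr 1
  simp [usmul]

lemma eq_act_iff (g : CC F K) (α β : Om F K) : β = act F K g α ↔ α = act F K g⁻¹ β := by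
  constructor
  · rintro rfl; rw [act_act, inv_mul_cancel, act_one]
  · rintro rfl; rw [act_act, mul_inv_cancel, act_one]

lemma mem_rrel_iff (g : CC F K) (α β : Om F K) :
    (α, β) ∈ rrel F K g ↔ β = act F K g α := by
  constructor
  · rintro ⟨u, v, y, hu, hv, hg, hy⟩
    have hu' : Quotient.mk (ksetoid F K) u = α := hu
    have hv' : Quotient.mk (ksetoid F K) v = β := hv
    rw [← hu', ← hv', ← hg, act_mk]
    congr 1
    exact Subtype.ext hy.symm
  · rintro rfl
    obtain ⟨y, rfl⟩ := QuotientGroup.mk_surjective g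
    obtain ⟨u, rfl⟩ := Quotient.exists_rep α
    exact ⟨u, usmul F y u, y, rfl, rfl, rfl, rfl⟩

lemma mem_srel_iff (g : CC F K) (u v : {w : Fin 2 → F // w ≠ 0}) :
    (Quotient.mk (ksetoid F K) u, Quotient.mk (ksetoid F K) v) ∈ srel F K g ↔
      ∃ y : Fˣ, (y : F) = dt F u v ∧ (QuotientGroup.mk y : CC F K) = g := by
  constructor
  · rintro ⟨u', v', y, hu, hv, hg, hy⟩
    obtain ⟨x, hxK, hx⟩ := Quotient.exact hu
    obtain ⟨z, hzK, hz⟩ := Quotient.exact hv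
    refine ⟨x * z * y, ?_, ?_⟩
    · have h1 : ∀ i, u.1 i = (x : F) * u'.1 i := by
        intro i; rw [← hx]; rfl
      have h2 : ∀ i, v.1 i = (z : F) * v'.1 i := by
        intro i; rw [← hz]; rfl
      simp only [dt, h1, h2, Units.val_mul, hy, dt]
      ring
    · have hx1 : (QuotientGroup.mk x : CC F K) = 1 := (QuotientGroup.eq_one_iff x).mpr hxK
      have hz1 : (QuotientGroup.mk z : CC F K) = 1 := (QuotientGroup.eq_one_iff z).mpr hzK
      rw [QuotientGroup.mk_mul, QuotientGroup.mk_mul, hx1, hz1, hg]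
      exact Eq.trans (congrArg (fun t => t * g) (one_mul (1 : Fˣ ⧸ K))) (one_mul g)
  · rintro ⟨y, hy, hg⟩
    exact ⟨u, v, y, rfl, rfl, hg, hy⟩

lemma dt_usmul_left (y : Fˣ) (u v : {w : Fin 2 → F // w ≠ 0}) :
    dt F (usmul F y u) v = (y : F) * dt F u v := by
  simp [dt, usmul]; ring

lemma dt_usmul_right (y : Fˣ) (u v : {w : Fin 2 → F // w ≠ 0}) :
    dt F u (usmul F y v) = (y : F) * dt F u v := by
  simp [dt, usmul]; ring

lemma srel_act_left (g h : CC F K) (α β : Om F K) :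
    (act F K g α, β) ∈ srel F K h ↔ (α, β) ∈ srel F K (g⁻¹ * h) := by
  obtain ⟨y, rfl⟩ := QuotientGroup.mk_surjective g
  obtain ⟨u, rfl⟩ := Quotient.exists_rep α
  obtain ⟨v, rfl⟩ := Quotient.exists_rep β
  rw [act_mk, mem_srel_iff, mem_srel_iff]
  constructor
  · rintro ⟨z, hz, rfl⟩
    refine ⟨y⁻¹ * z, ?_, by rw [QuotientGroup.mk_mul, QuotientGroup.mk_inv]⟩
    rw [dt_usmul_left] at hz
    rw [Units.val_mul, Units.val_inv_eq_inv_val, hz]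
    exact inv_mul_cancel_left₀ y.ne_zero _
  · rintro ⟨z, hz, hzg⟩
    refine ⟨y * z, ?_, ?_⟩
    · rw [dt_usmul_left, Units.val_mul, hz]
    · rw [QuotientGroup.mk_mul, hzg, mul_inv_cancel_left]

lemma srel_act_right (g h : CC F K) (α β : Om F K) :
    (α, act F K g β) ∈ srel F K h ↔ (α, β) ∈ srel F K (g⁻¹ * h) := by
  obtain ⟨y, rfl⟩ := QuotientGroup.mk_surjective g
  obtain ⟨u, rfl⟩ := Quotient.exists_rep α
  obtain ⟨v, rfl⟩ := Quotient.exists_rep β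
  rw [act_mk, mem_srel_iff, mem_srel_iff]
  constructor
  · rintro ⟨z, hz, rfl⟩
    refine ⟨y⁻¹ * z, ?_, by rw [QuotientGroup.mk_mul, QuotientGroup.mk_inv]⟩
    rw [dt_usmul_right] at hz
    rw [Units.val_mul, Units.val_inv_eq_inv_val, hz]
    exact inv_mul_cancel_left₀ y.ne_zero _
  · rintro ⟨z, hz, hzg⟩
    refine ⟨y * z, ?_, ?_⟩
    · rw [dt_usmul_right, Units.val_mul, hz]
    · rw [QuotientGroup.mk_mul, hzg, mul_inv_cancel_left]

lemma Amat_mul (g : CC F K) (M : Matrix (Om F K) (Om F K) ℤ) :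
    Amat F K g * M = Matrix.of (fun α β => M (act F K g α) β) := by
  ext α β
  simp only [Matrix.mul_apply, Amat, Matrix.of_apply, mem_rrel_iff, ite_mul, one_mul, zero_mul]
  rw [Finset.sum_ite_eq' Finset.univ (act F K g α) (fun γ => M γ β)]
  simp

lemma mul_Amat (g : CC F K) (M : Matrix (Om F K) (Om F K) ℤ) :
    M * Amat F K g = Matrix.of (fun α β => M α (act F K g⁻¹ β)) := by
  ext α β
  simp only [Matrix.mul_apply, Amat, Matrix.of_apply, mem_rrel_iff, mul_ite, mul_one, mul_zero]
  have : ∀ γ : Om F K, β = act F K g γ ↔ γ = act F K g⁻¹ β := by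
    intro γ; exact eq_act_iff F K g γ β
  simp only [this]
  rw [Finset.sum_ite_eq' Finset.univ (act F K g⁻¹ β) (fun γ => M α γ)]
  simp

lemma Amat_mul_Amat (g h : CC F K) : Amat F K g * Amat F K h = Amat F K (h * g) := by
  rw [Amat_mul]
  ext α β
  simp only [Matrix.of_apply, Amat, mem_rrel_iff, act_act]

lemma Amat_mul_Bmat (g h : CC F K) : Amat F K g * Bmat F K h = Bmat F K (g⁻¹ * h) := by
  rw [Amat_mul]
  ext α β
  simp only [Matrix.of_apply, Bmat, srel_act_left]

lemma Bmat_mul_Amat (g h : CC F K) : Bmat F K h * Amat F K g = Bmat F K (g * h) := by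
  rw [mul_Amat]
  ext α β
  simp only [Matrix.of_apply, Bmat, srel_act_right]
  have e : g⁻¹⁻¹ * h = g * h := congrArg (fun t => t * h) (inv_inv g)
  rw [e]

lemma Bmat_injective : Function.Injective (Bmat F K) := by
  intro g h hgh
  by_contra hne
  obtain ⟨y, rfl⟩ := QuotientGroup.mk_surjective g
  have h10 : (![1, 0] : Fin 2 → F) ≠ 0 := by
    intro hzero
    have := congrFun hzero 0
    simp at this
  have h0y : (![0, (y : F)] : Fin 2 → F) ≠ 0 := by
    intro hzero
    apply y.ne_zero
    have := congrFun hzero 1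
    simpa using this
  set u : {w : Fin 2 → F // w ≠ 0} := ⟨![1, 0], h10⟩
  set v : {w : Fin 2 → F // w ≠ 0} := ⟨![0, (y : F)], h0y⟩
  have hdt : dt F u v = (y : F) := by simp [dt, u, v]
  have hmem : (Quotient.mk (ksetoid F K) u, Quotient.mk (ksetoid F K) v) ∈
      srel F K (QuotientGroup.mk y) := (mem_srel_iff F K _ u v).mpr ⟨y, hdt.symm, rfl⟩
  have hnmem : (Quotient.mk (ksetoid F K) u, Quotient.mk (ksetoid F K) v) ∉ srel F K h := by
    intro hm
    obtain ⟨z, hz, hzg⟩ := (mem_srel_iff F K h u v).mp hm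
    have : z = y := Units.ext (by rw [hz, hdt])
    exact hne (by rw [← hzg, this])
  have := congrFun (congrFun hgh (Quotient.mk (ksetoid F K) u)) (Quotient.mk (ksetoid F K) v)
  simp only [Bmat, Matrix.of_apply, if_pos hmem, if_neg hnmem] at this
  exact one_ne_zero this

lemma Bmat_eq_A_mul (g : CC F K) : Bmat F K g = Amat F K g⁻¹ * Bmat F K 1 := by
  have e : g⁻¹⁻¹ * 1 = g := (mul_one _).trans (inv_inv g)
  rw [Amat_mul_Bmat, e]

lemma Bmat_eq_mul_A (g : CC F K) : Bmat F K g = Bmat F K 1 * Amat F K g := by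
  have e : g * 1 = g := mul_one g
  rw [Bmat_mul_Amat, e]

lemma S_comm (c : CC F K) :
    Amat F K c * (Bmat F K 1 * Bmat F K 1) = (Bmat F K 1 * Bmat F K 1) * Amat F K c := by
  have e1 : c⁻¹ * 1 = c⁻¹ := by exact mul_one (c⁻¹)
  have e2 : c⁻¹⁻¹ * 1 = c := (mul_one _).trans (inv_inv c)
  calc Amat F K c * (Bmat F K 1 * Bmat F K 1)
      = (Amat F K c * Bmat F K 1) * Bmat F K 1 := (mul_assoc _ _ _).symm
    _ = Bmat F K c⁻¹ * Bmat F K 1 := by rw [Amat_mul_Bmat, e1]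
    _ = (Bmat F K 1 * Amat F K c⁻¹) * Bmat F K 1 := by rw [← Bmat_eq_mul_A]
    _ = Bmat F K 1 * (Amat F K c⁻¹ * Bmat F K 1) := mul_assoc _ _ _
    _ = Bmat F K 1 * Bmat F K c := by rw [Amat_mul_Bmat, e2]
    _ = Bmat F K 1 * (Bmat F K 1 * Amat F K c) := by rw [← Bmat_eq_mul_A]
    _ = (Bmat F K 1 * Bmat F K 1) * Amat F K c := (mul_assoc _ _ _).symm

lemma Bmat_mul_Bmat (g h : CC F K) :
    Bmat F K g * Bmat F K h = Amat F K (h * g⁻¹) * (Bmat F K 1 * Bmat F K 1) := by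
  calc Bmat F K g * Bmat F K h
      = (Amat F K g⁻¹ * Bmat F K 1) * (Bmat F K 1 * Amat F K h) := by
        rw [← Bmat_eq_A_mul, ← Bmat_eq_mul_A]
    _ = Amat F K g⁻¹ * ((Bmat F K 1 * Bmat F K 1) * Amat F K h) := by
        rw [mul_assoc, ← mul_assoc (Bmat F K 1)]
    _ = Amat F K g⁻¹ * (Amat F K h * (Bmat F K 1 * Bmat F K 1)) := by rw [← S_comm]
    _ = (Amat F K g⁻¹ * Amat F K h) * (Bmat F K 1 * Bmat F K 1) := (mul_assoc _ _ _).symm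
    _ = Amat F K (h * g⁻¹) * (Bmat F K 1 * Bmat F K 1) := by rw [Amat_mul_Amat]

lemma sq_one (hn2 : K.index ≤ 2) (g : CC F K) : g * g = 1 := by
  have h0 : K.index ≠ 0 := Subgroup.index_ne_zero_of_finite
  have h1 : orderOf g ∣ Nat.card (CC F K) := orderOf_dvd_natCard g
  have hcard : Nat.card (CC F K) = K.index := rfl
  rw [hcard] at h1
  have hdvd : orderOf g ∣ 2 := h1.trans (by
    rcases Nat.lt_or_ge K.index 2 with h | h
    · have : K.index = 1 := by omega
      rw [this]; exact one_dvd 2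
    · have : K.index = 2 := by omega
      rw [this])
  have h2 : g ^ 2 = 1 := orderOf_dvd_iff_pow_eq_one.mp hdvd
  calc g * g = g ^ 2 := (pow_two g).symm
    _ = 1 := h2

lemma exists_sq_ne (hn3 : 3 ≤ K.index) : ∃ g : CC F K, g * g ≠ 1 := by
  haveI : IsCyclic (CC F K) :=
    isCyclic_of_surjective (QuotientGroup.mk' K) (QuotientGroup.mk'_surjective K)
  obtain ⟨g, hg⟩ := IsCyclic.exists_generator (α := CC F K)
  refine ⟨g, fun hsq => ?_⟩
  have h1 : orderOf g ∣ 2 := orderOf_dvd_iff_pow_eq_one.mpr ((pow_two g).trans hsq)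
  have h2 : orderOf g = Nat.card (CC F K) := orderOf_eq_card_of_forall_mem_zpowers hg
  have h3 : Nat.card (CC F K) = K.index := rfl
  have h4 := Nat.le_of_dvd (by norm_num) h1
  omega

end Tatra

open Tatra in
/-- the matrices in `{A_g : g ∈ C} ∪ {B_g : g ∈ C}` pairwise commute
iff `n ≤ 2`; equivalently, some two of them fail to commute iff `n ≥ 3`. -/
theorem stmt_4 (F : Type) [Field F] [Fintype F] (K : Subgroup Fˣ) (q n : ℕ)
    (hq : Fintype.card F = q) (hn : K.index = n) (hnd : n ∣ q - 1)
    (heven : Even (q * ((q - 1) / n))) :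
    ((∀ M ∈ Set.range (Amat F K) ∪ Set.range (Bmat F K),
        ∀ N ∈ Set.range (Amat F K) ∪ Set.range (Bmat F K), M * N = N * M) ↔ n ≤ 2) ∧
    ((∃ M ∈ Set.range (Amat F K) ∪ Set.range (Bmat F K),
        ∃ N ∈ Set.range (Amat F K) ∪ Set.range (Bmat F K), M * N ≠ N * M) ↔ 3 ≤ n) := by
  have hmain : (∀ M ∈ Set.range (Amat F K) ∪ Set.range (Bmat F K),
      ∀ N ∈ Set.range (Amat F K) ∪ Set.range (Bmat F K), M * N = N * M) ↔ n ≤ 2 := by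
    constructor
    · intro hcomm
      by_contra hle
      obtain ⟨g, hg⟩ := exists_sq_ne F K (by omega)
      have h1 := hcomm (Amat F K g) (Or.inl ⟨g, rfl⟩) (Bmat F K 1) (Or.inr ⟨1, rfl⟩)
      rw [Amat_mul_Bmat, Bmat_mul_Amat] at h1
      have h2 : g⁻¹ * 1 = g * 1 := Bmat_injective F K h1
      apply hg
      have e : g⁻¹ = g := by
        calc g⁻¹ = g⁻¹ * 1 := (mul_one _).symm
          _ = g * 1 := h2
          _ = g := mul_one g
      exact (congrArg (fun t => g * t) e.symm).trans (mul_inv_cancel g)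
    · intro hn2 M hM N hN
      have hi2 : K.index ≤ 2 := by omega
      have hinv : ∀ g : CC F K, g⁻¹ = g := fun g =>
        inv_eq_of_mul_eq_one_right (sq_one F K hi2 g)
      rcases hM with ⟨g, rfl⟩ | ⟨g, rfl⟩ <;> rcases hN with ⟨h, rfl⟩ | ⟨h, rfl⟩
      · rw [Amat_mul_Amat, Amat_mul_Amat]
        exact congrArg (Amat F K) (mul_comm h g)
      · rw [Amat_mul_Bmat, Bmat_mul_Amat]
        exact congrArg (Bmat F K) (congrArg (fun t => t * h) (hinv g))
      · rw [Bmat_mul_Amat, Amat_mul_Bmat]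
        exact congrArg (Bmat F K) (congrArg (fun t => t * g) (hinv h)).symm
      · refine (Bmat_mul_Bmat F K g h).trans (Eq.trans ?_ (Bmat_mul_Bmat F K h g).symm)
        refine congrArg (fun c => Amat F K c * (Bmat F K 1 * Bmat F K 1)) ?_
        calc h * g⁻¹ = h * g := congrArg (fun t => h * t) (hinv g)
          _ = g * h := mul_comm h g
          _ = g * h⁻¹ := (congrArg (fun t => g * t) (hinv h)).symm
  refine ⟨hmain, ?_, ?_⟩
  · rintro ⟨M, hM, N, hN, hMN⟩
    by_contra hc
    exact hMN (hmain.mpr (by omega) M hM N hN)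
  · intro h3
    by_contra hno
    push_neg at hno
    have := hmain.mp hno
    omega
end

section
/- Let g ∈ C, α₀ ∈ Ω, and let Λ = Cα be a line with Λ ≠ Cα₀. Then there exists a unique α ∈ Λ such that (α₀,α) ∈ s_g. -/
open Classical Matrix

namespace Tatra

variable (F : Type) [Field F] [Fintype F] (K : Subgroup Fˣ)

/-- scaled nonzero vector -/
def smulV (c : Fˣ) (u : {w : Fin 2 → F // w ≠ 0}) : {w : Fin 2 → F // w ≠ 0} :=
  ⟨(c : F) • u.1, smul_ne_zero c.ne_zero u.2⟩

lemma dt_smul_left (c : Fˣ) (u v : {w : Fin 2 → F // w ≠ 0}) :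
    dt F (smulV F c u) v = (c : F) * dt F u v := by
  simp [dt, smulV, Pi.smul_apply, smul_eq_mul]; ring

lemma dt_smul_right (c : Fˣ) (u v : {w : Fin 2 → F // w ≠ 0}) :
    dt F u (smulV F c v) = (c : F) * dt F u v := by
  simp [dt, smulV, Pi.smul_apply, smul_eq_mul]; ring

lemma exists_smul_of_dt_eq_zero (u v : {w : Fin 2 → F // w ≠ 0})
    (h : dt F u v = 0) : ∃ t : Fˣ, (t : F) • u.1 = v.1 := by
  have hdet : u.1 0 * v.1 1 = u.1 1 * v.1 0 := by
    have := sub_eq_zero.mp h; exact this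
  have hu : u.1 0 ≠ 0 ∨ u.1 1 ≠ 0 := by
    by_contra hc
    push_neg at hc
    exact u.2 (funext fun i => by fin_cases i <;> simp [hc.1, hc.2])
  have hv : v.1 0 ≠ 0 ∨ v.1 1 ≠ 0 := by
    by_contra hc
    push_neg at hc
    exact v.2 (funext fun i => by fin_cases i <;> simp [hc.1, hc.2])
  rcases hu with h0 | h1
  · have hv0 : v.1 0 ≠ 0 := by
      rcases hv with h | h
      · exact h
      · intro hz
        apply h
        have : u.1 0 * v.1 1 = 0 := by rw [hdet, hz, mul_zero]
        exact (mul_eq_zero.mp this).resolve_left h0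
    refine ⟨Units.mk0 (v.1 0 / u.1 0) (div_ne_zero hv0 h0), funext fun i => ?_⟩
    fin_cases i <;> simp only [Pi.smul_apply, smul_eq_mul, Units.val_mk0, Fin.zero_eta, Fin.mk_one]
    · field_simp
    · field_simp
      linear_combination -hdet
  · have hv1 : v.1 1 ≠ 0 := by
      rcases hv with h | h
      · intro hz
        apply h
        have : u.1 1 * v.1 0 = 0 := by rw [← hdet, hz, mul_zero]
        exact (mul_eq_zero.mp this).resolve_left h1
      · exact h
    refine ⟨Units.mk0 (v.1 1 / u.1 1) (div_ne_zero hv1 h1), funext fun i => ?_⟩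
    fin_cases i <;> simp only [Pi.smul_apply, smul_eq_mul, Units.val_mk0, Fin.zero_eta, Fin.mk_one]
    · field_simp
      linear_combination hdet
    · field_simp

lemma mem_line_iff (u : {w : Fin 2 → F // w ≠ 0}) (β : Om F K) :
    β ∈ line F K (Quotient.mk (ksetoid F K) u) ↔
      ∃ c : Fˣ, β = Quotient.mk (ksetoid F K) (smulV F c u) := by
  constructor
  · rintro ⟨g, u', v, y, hu', hv, -, hyu⟩
    obtain ⟨x, hx, hxu⟩ := Quotient.exact hu'
    refine ⟨y * x⁻¹, ?_⟩
    rw [← show Quotient.mk (ksetoid F K) v = β from hv]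
    congr 1
    apply Subtype.ext
    show v.1 = ((y * x⁻¹ : Fˣ) : F) • u.1
    rw [← hxu, ← hyu, smul_smul]
    congr 1
    push_cast
    field_simp
  · rintro ⟨c, rfl⟩
    exact ⟨QuotientGroup.mk c, u, smulV F c u, c, rfl, rfl, rfl, rfl⟩

lemma srel_iff (u v : {w : Fin 2 → F // w ≠ 0}) (g : CC F K) :
    (Quotient.mk (ksetoid F K) u, Quotient.mk (ksetoid F K) v) ∈ srel F K g ↔
      ∃ y : Fˣ, (QuotientGroup.mk y : CC F K) = g ∧ (y : F) = dt F u v := by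
  constructor
  · rintro ⟨u', v', y, hu', hv', hyg, hyd⟩
    obtain ⟨x, hx, hxu⟩ := Quotient.exact hu'
    obtain ⟨z, hz, hzv⟩ := Quotient.exact hv'
    refine ⟨x * z * y, ?_, ?_⟩
    · rw [← hyg]
      have hcomm : x * z * y = y * (x * z) := mul_comm _ _
      rw [hcomm]
      exact QuotientGroup.mk_mul_of_mem y (K.mul_mem hx hz)
    · have h1 : dt F u v = dt F (smulV F x u') (smulV F z v') := by
        congr 1 <;> apply Subtype.ext <;> simp [smulV, hxu, hzv]
      rw [h1, dt_smul_left, dt_smul_right, ← hyd]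
      push_cast; ring
  · rintro ⟨y, hyg, hyd⟩
    exact ⟨u, v, y, rfl, rfl, hyg, hyd⟩

end Tatra
open Tatra in
/-- if `Λ = Cα₁` is a line different from `Cα₀`, then there is a unique
`α ∈ Λ` with `(α₀, α) ∈ s_g`. -/
theorem stmt_6 (F : Type) [Field F] [Fintype F] (K : Subgroup Fˣ) (q n : ℕ)
    (hq : Fintype.card F = q) (hn : K.index = n) (hnd : n ∣ q - 1)
    (heven : Even (q * ((q - 1) / n)))
    (g : CC F K) (α₀ α₁ : Om F K) (hne : line F K α₁ ≠ line F K α₀) :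
    ∃! α : Om F K, α ∈ line F K α₁ ∧ (α₀, α) ∈ srel F K g := by
  obtain ⟨u₀, rfl⟩ := α₀.exists_rep
  obtain ⟨u₁, rfl⟩ := α₁.exists_rep
  -- the determinant of the two base points is nonzero
  have hd : dt F u₀ u₁ ≠ 0 := by
    intro h0
    apply hne
    obtain ⟨t, ht⟩ := exists_smul_of_dt_eq_zero F u₀ u₁ h0
    have hq1 : Quotient.mk (ksetoid F K) u₁ = Quotient.mk (ksetoid F K) (smulV F t u₀) := by
      apply Quotient.sound
      exact ⟨1, K.one_mem, by simp [smulV, ht]⟩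
    rw [hq1]
    ext β
    rw [mem_line_iff, mem_line_iff]
    constructor
    · rintro ⟨c, rfl⟩
      refine ⟨c * t, ?_⟩
      congr 1
      apply Subtype.ext
      simp [smulV, smul_smul]
    · rintro ⟨c, rfl⟩
      refine ⟨c * t⁻¹, ?_⟩
      congr 1
      apply Subtype.ext
      simp [smulV, smul_smul, mul_assoc]
  set dU : Fˣ := Units.mk0 (dt F u₀ u₁) hd with hdU
  obtain ⟨yg, hyg⟩ := QuotientGroup.mk_surjective g
  set c : Fˣ := yg * dU⁻¹ with hc
  refine ⟨Quotient.mk (ksetoid F K) (smulV F c u₁), ⟨?_, ?_⟩, ?_⟩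
  · exact (mem_line_iff F K u₁ _).mpr ⟨c, rfl⟩
  · refine (srel_iff F K u₀ (smulV F c u₁) g).mpr ⟨yg, hyg, ?_⟩
    rw [dt_smul_right]
    have : (yg : F) = (c : F) * (dU : F) := by
      rw [hc]; push_cast; field_simp
    simpa [hdU] using this
  · rintro β ⟨hβl, hβs⟩
    obtain ⟨c', rfl⟩ := (mem_line_iff F K u₁ β).mp hβl
    obtain ⟨y, hyg', hyd⟩ := (srel_iff F K u₀ (smulV F c' u₁) g).mp hβs
    rw [dt_smul_right] at hyd
    have hyu : y = c' * dU := by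
      apply Units.ext
      push_cast
      rw [hyd, hdU]
      simp
    have h1 : (QuotientGroup.mk (c' * dU) : CC F K) = QuotientGroup.mk yg := by
      rw [← hyu, hyg', hyg]
    have h3 : (c' * dU)⁻¹ * yg ∈ K := QuotientGroup.eq.mp h1
    have h4 : c'⁻¹ * c = (c' * dU)⁻¹ * yg := by
      apply Units.ext
      rw [hc]
      push_cast
      field_simp
    have hK : c'⁻¹ * c ∈ K := h4 ▸ h3
    apply Quotient.sound
    refine ⟨c'⁻¹ * c, hK, ?_⟩
    show ((c'⁻¹ * c : Fˣ) : F) • ((c' : F) • u₁.1) = (c : F) • u₁.1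
    rw [smul_smul]
    congr 1
    push_cast
    field_simp
end

section
/- For every invertible 2×2 matrix T over F, every field automorphism σ of F, and every g ∈ C: r_g^{f_{T,σ}} = r_{g^σ} and s_g^{f_{T,σ}} = s_{K·det(T)·g^σ}, where K·det(T) denotes the image of det(T) in C = Fˣ/K. -/
open Classical Matrix

section Stmt7Aux

open Tatra Polynomial

variable {F : Type} [Field F] [Fintype F] {K : Subgroup Fˣ}

private lemma tatra_pow_iff (K : Subgroup Fˣ) :
    ∀ a : Fˣ, a ∈ K ↔ a ^ Nat.card K = 1 := by
  classical
  set k := Nat.card K with hk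
  have hk0 : 0 < k := Nat.card_pos
  set Sf : Finset Fˣ := Finset.univ.filter (fun g : Fˣ => g ^ k = 1) with hSf
  have hfin : ((K : Set Fˣ).toFinset : Finset Fˣ) ⊆ Sf := by
    intro a ha
    simp only [Set.mem_toFinset, SetLike.mem_coe] at ha
    have : (⟨a, ha⟩ : K) ^ k = 1 := pow_card_eq_one'
    simp only [hSf, Finset.mem_filter, Finset.mem_univ, true_and]
    simpa [Subtype.ext_iff] using this
  have hcard : Sf.card ≤ k := by
    have h1 := card_nthRoots_subgroup_units (Units.coeHom F) (fun _ _ h => Units.ext h) hk0 1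
    have h2 := card_nthRoots k ((Units.coeHom F) (1 : Fˣ))
    calc Sf.card ≤ Multiset.card (nthRoots k ((Units.coeHom F) 1)) := by
          convert h1 using 2
      _ ≤ k := by simpa using h2
  have hKcard : ((K : Set Fˣ).toFinset).card = k := by
    rw [Set.toFinset_card]; simp [hk, Nat.card_eq_fintype_card]
  have heq := Finset.eq_of_subset_of_card_le hfin (by omega)
  intro a
  constructor
  · intro ha
    have := hfin (by simpa using ha)
    simpa [hSf] using this
  · intro ha
    have : a ∈ (K : Set Fˣ).toFinset := by rw [heq]; simp [hSf, ha]
    simpa using this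

private lemma tatra_map_mem (σ : F ≃+* F) {x : Fˣ} (hx : x ∈ K) :
    Units.map (σ : F →+* F).toMonoidHom x ∈ K := by
  have h := (tatra_pow_iff K x).1 hx
  refine (tatra_pow_iff K _).2 ?_
  rw [← map_pow, h, _root_.map_one]

private lemma tatra_mk_eq {u v : {w : Fin 2 → F // w ≠ 0}} :
    Quotient.mk (ksetoid F K) u = Quotient.mk (ksetoid F K) v ↔
      ∃ x : Fˣ, x ∈ K ∧ ((x : F) • u.1 = v.1) := by
  constructor
  · exact fun h => Quotient.exact h
  · exact fun h => Quotient.sound h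

private lemma tatra_dt_map (T : Matrix (Fin 2) (Fin 2) F) (σ : F ≃+* F)
    (a b : Fin 2 → F) :
    (T.mulVec (fun i => σ (a i)) 0) * (T.mulVec (fun i => σ (b i)) 1)
      - (T.mulVec (fun i => σ (a i)) 1) * (T.mulVec (fun i => σ (b i)) 0)
      = T.det * σ (a 0 * b 1 - a 1 * b 0) := by
  simp only [Matrix.mulVec, dotProduct, Fin.sum_univ_two, Matrix.det_fin_two,
    _root_.map_sub, _root_.map_mul]
  ring

end Stmt7Aux


open Tatra in
/-- for every invertible `T`, field automorphism `σ`, and `g ∈ C`: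
`r_g^{f_{T,σ}} = r_{g^σ}` and `s_g^{f_{T,σ}} = s_{K·det(T)·g^σ}`. Here `g'` denotes the
image `g^σ` of `g` under the automorphism of `C` induced by `σ`, and `y₀ ∈ Fˣ` is
`det T` viewed as a unit. -/
theorem stmt_7 (F : Type) [Field F] [Fintype F] (K : Subgroup Fˣ) (q n : ℕ)
    (hq : Fintype.card F = q) (hn : K.index = n) (hnd : n ∣ q - 1)
    (heven : Even (q * ((q - 1) / n)))
    (T : Matrix (Fin 2) (Fin 2) F) (hT : IsUnit T) (σ : F ≃+* F)
    (f : Equiv.Perm (Om F K)) (hf : Implements F K T σ f)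
    (g g' : CC F K)
    (hg' : ∀ y : Fˣ, (QuotientGroup.mk y : CC F K) = g →
      (QuotientGroup.mk (Units.map (σ : F →+* F).toMonoidHom y) : CC F K) = g')
    (y₀ : Fˣ) (hy₀ : (y₀ : F) = T.det) :
    relImage F K f (rrel F K g) = rrel F K g' ∧
    relImage F K f (srel F K g) = srel F K ((QuotientGroup.mk y₀ : CC F K) * g') := by
  classical
  have hσK' : ∀ {x : Fˣ}, x ∈ K → Units.map (σ.symm : F →+* F).toMonoidHom x ∈ K :=
    fun hx => tatra_map_mem σ.symm hx
  have hTinj : Function.Injective T.mulVec := Matrix.mulVec_injective_iff_isUnit.2 hT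
  have hne : ∀ u : {w : Fin 2 → F // w ≠ 0}, T.mulVec (fun i => σ (u.1 i)) ≠ 0 := by
    intro u h
    apply u.2
    have h0 : (fun i => σ (u.1 i)) = (0 : Fin 2 → F) := by
      apply hTinj
      rw [h, Matrix.mulVec_zero]
    funext i
    have := congrFun h0 i
    simpa using this
  set tm : {w : Fin 2 → F // w ≠ 0} → {w : Fin 2 → F // w ≠ 0} :=
    fun u => ⟨T.mulVec (fun i => σ (u.1 i)), hne u⟩ with htm
  have hftm : ∀ u, f (Quotient.mk (ksetoid F K) u) = Quotient.mk (ksetoid F K) (tm u) :=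
    fun u => hf u (tm u) rfl
  have hsmul : ∀ (c : F) (u : {w : Fin 2 → F // w ≠ 0}),
      T.mulVec (fun i => σ ((c • u.1) i)) = σ c • (tm u).1 := by
    intro c u
    have e : (fun i => σ ((c • u.1) i)) = σ c • fun i => σ (u.1 i) := by
      funext i; simp [Pi.smul_apply, smul_eq_mul, _root_.map_mul]
    rw [e, Matrix.mulVec_smul]
  have hdt : ∀ u v, dt F (tm u) (tm v) = T.det * σ (dt F u v) := by
    intro u v
    exact tatra_dt_map T σ u.1 v.1
  have hconv : ∀ w : Fˣ,
      (QuotientGroup.mk (Units.map (σ : F →+* F).toMonoidHom w) : CC F K) = g' →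
      (QuotientGroup.mk w : CC F K) = g := by
    intro w hw
    obtain ⟨y₁, hy₁⟩ := QuotientGroup.mk_surjective g
    have h1 := hg' y₁ hy₁
    have h2 : (Units.map (σ : F →+* F).toMonoidHom y₁)⁻¹ *
        Units.map (σ : F →+* F).toMonoidHom w ∈ K :=
      (QuotientGroup.eq).1 (h1.trans hw.symm)
    have h3 : Units.map (σ : F →+* F).toMonoidHom (y₁⁻¹ * w) ∈ K := by
      simpa [_root_.map_mul] using h2
    have h4 := hσK' h3
    have h5 : Units.map (σ.symm : F →+* F).toMonoidHom
        (Units.map (σ : F →+* F).toMonoidHom (y₁⁻¹ * w)) = y₁⁻¹ * w := by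
      ext; simp
    rw [h5] at h4
    rw [← hy₁]
    exact ((QuotientGroup.eq).2 h4).symm
  constructor
  · ext p
    constructor
    · rintro ⟨⟨α, β⟩, ⟨u, v, y, hu, hv, hy, hyv⟩, rfl⟩
      have hu1 : Quotient.mk (ksetoid F K) u = α := hu
      have hv1 : Quotient.mk (ksetoid F K) v = β := hv
      refine ⟨tm u, tm v, Units.map (σ : F →+* F).toMonoidHom y, ?_, ?_, hg' y hy, ?_⟩
      · show Quotient.mk (ksetoid F K) (tm u) = f α
        rw [← hu1, hftm u]
      · show Quotient.mk (ksetoid F K) (tm v) = f β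
        rw [← hv1, hftm v]
      · have e1 := hsmul ((y : Fˣ) : F) u
        rw [hyv] at e1
        show ((Units.map (σ : F →+* F).toMonoidHom y : Fˣ) : F) • (tm u).1 = (tm v).1
        rw [show ((Units.map (σ : F →+* F).toMonoidHom y : Fˣ) : F) = σ (y : F) from rfl]
        exact e1.symm
    · rintro ⟨u, v, y', hu, hv, hy', hyv⟩
      obtain ⟨u₀, hu₀⟩ := Quotient.exists_rep (f.symm p.1)
      have hu₀' : Quotient.mk (ksetoid F K) u₀ = f.symm p.1 := hu₀
      obtain ⟨y₁, hy₁⟩ := QuotientGroup.mk_surjective g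
      have hv₀ne : ((y₁ : F) • u₀.1) ≠ 0 := smul_ne_zero y₁.ne_zero u₀.2
      refine ⟨(Quotient.mk (ksetoid F K) u₀, Quotient.mk (ksetoid F K) ⟨(y₁ : F) • u₀.1, hv₀ne⟩),
        ⟨u₀, ⟨(y₁ : F) • u₀.1, hv₀ne⟩, y₁, rfl, rfl, hy₁, rfl⟩, ?_⟩
      have hfu₀ : f (Quotient.mk (ksetoid F K) u₀) = p.1 := by
        rw [hu₀']; exact f.apply_symm_apply _
      have h1 : Quotient.mk (ksetoid F K) (tm u₀) = Quotient.mk (ksetoid F K) u := by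
        rw [← hftm u₀, hfu₀, ← hu]
      obtain ⟨k₁, hk₁K, hk₁⟩ := tatra_mk_eq.1 h1
      have hkK : (Units.map (σ : F →+* F).toMonoidHom y₁)⁻¹ * y' ∈ K :=
        (QuotientGroup.eq).1 ((hg' y₁ hy₁).trans hy'.symm)
      have hfv₀ : f (Quotient.mk (ksetoid F K) ⟨(y₁ : F) • u₀.1, hv₀ne⟩) = p.2 := by
        rw [hftm, ← hv]
        apply Quotient.sound
        refine ⟨(Units.map (σ : F →+* F).toMonoidHom y₁)⁻¹ * y' * k₁,
          K.mul_mem hkK hk₁K, ?_⟩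
        have e1 : (tm ⟨(y₁ : F) • u₀.1, hv₀ne⟩).1 = σ (y₁ : F) • (tm u₀).1 :=
          hsmul ((y₁ : Fˣ) : F) u₀
        rw [e1, smul_smul, ← hyv, ← hk₁, smul_smul]
        congr 1
        have hσy₁ : ((Units.map (σ : F →+* F).toMonoidHom y₁ : Fˣ) : F) = σ (y₁ : F) := rfl
        have hσy₁ne : σ ((y₁ : Fˣ) : F) ≠ 0 := by
          simp [map_eq_zero]
        rw [Units.val_mul, Units.val_mul, Units.val_inv_eq_inv_val, hσy₁]
        field_simp
      exact Prod.ext hfu₀ hfv₀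
  · ext p
    constructor
    · rintro ⟨⟨α, β⟩, ⟨u, v, y, hu, hv, hy, hyd⟩, rfl⟩
      have hu1 : Quotient.mk (ksetoid F K) u = α := hu
      have hv1 : Quotient.mk (ksetoid F K) v = β := hv
      refine ⟨tm u, tm v, y₀ * Units.map (σ : F →+* F).toMonoidHom y, ?_, ?_, ?_, ?_⟩
      · show Quotient.mk (ksetoid F K) (tm u) = f α
        rw [← hu1, hftm u]
      · show Quotient.mk (ksetoid F K) (tm v) = f β
        rw [← hv1, hftm v]
      · rw [QuotientGroup.mk_mul, hg' y hy]
      · rw [hdt u v, ← hyd]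
        rw [Units.val_mul, hy₀]
        rfl
    · rintro ⟨u, v, z, hu, hv, hz, hzd⟩
      obtain ⟨u₀, hu₀⟩ := Quotient.exists_rep (f.symm p.1)
      have hu₀' : Quotient.mk (ksetoid F K) u₀ = f.symm p.1 := hu₀
      obtain ⟨v₀, hv₀⟩ := Quotient.exists_rep (f.symm p.2)
      have hv₀' : Quotient.mk (ksetoid F K) v₀ = f.symm p.2 := hv₀
      have hfu₀ : f (Quotient.mk (ksetoid F K) u₀) = p.1 := by
        rw [hu₀']; exact f.apply_symm_apply _
      have hfv₀ : f (Quotient.mk (ksetoid F K) v₀) = p.2 := by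
        rw [hv₀']; exact f.apply_symm_apply _
      obtain ⟨k₁, hk₁K, hk₁⟩ := tatra_mk_eq.1 ((hftm u₀).symm.trans (hfu₀.trans hu.symm))
      obtain ⟨k₂, hk₂K, hk₂⟩ := tatra_mk_eq.1 ((hftm v₀).symm.trans (hfv₀.trans hv.symm))
      set w : Fˣ := Units.map (σ.symm : F →+* F).toMonoidHom (y₀⁻¹ * z * k₁⁻¹ * k₂⁻¹) with hw
      have e1 : dt F u v = (k₁ : F) * (k₂ : F) * (T.det * σ (dt F u₀ v₀)) := by
        rw [← hdt u₀ v₀]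
        simp only [dt, ← hk₁, ← hk₂, Pi.smul_apply, smul_eq_mul]
        ring
      have e2 : σ (dt F u₀ v₀) = ((y₀⁻¹ * z * k₁⁻¹ * k₂⁻¹ : Fˣ) : F) := by
        have hz' : (z : F) = (k₁ : F) * (k₂ : F) * ((y₀ : F) * σ (dt F u₀ v₀)) := by
          rw [hzd, e1, hy₀]
        rw [Units.val_mul, Units.val_mul, Units.val_mul, Units.val_inv_eq_inv_val,
          Units.val_inv_eq_inv_val, Units.val_inv_eq_inv_val, hz']
        field_simp
      have hwval : (w : F) = dt F u₀ v₀ := by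
        have : (w : F) = σ.symm ((y₀⁻¹ * z * k₁⁻¹ * k₂⁻¹ : Fˣ) : F) := rfl
        rw [this, ← e2, RingEquiv.symm_apply_apply]
      have hwg : (QuotientGroup.mk w : CC F K) = g := by
        apply hconv
        have hmapw : Units.map (σ : F →+* F).toMonoidHom w = y₀⁻¹ * z * k₁⁻¹ * k₂⁻¹ := by
          ext; simp [hw]
        rw [hmapw]
        have h4 : (QuotientGroup.mk (y₀⁻¹ * z * k₁⁻¹ * k₂⁻¹) : CC F K) =
            QuotientGroup.mk (y₀⁻¹ * z) := by
          apply (QuotientGroup.eq).2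
          have hK : (y₀⁻¹ * z * k₁⁻¹ * k₂⁻¹)⁻¹ * (y₀⁻¹ * z) = k₂ * k₁ := by group
          rw [hK]; exact K.mul_mem hk₂K hk₁K
        rw [h4, QuotientGroup.mk_mul, QuotientGroup.mk_inv, hz]
        exact inv_mul_cancel_left _ g'
      exact ⟨(Quotient.mk (ksetoid F K) u₀, Quotient.mk (ksetoid F K) v₀),
        ⟨u₀, v₀, w, rfl, rfl, hwg, hwval⟩, Prod.ext hfu₀ hfv₀⟩
end

section
/- Let D ⊆ C be a difference set with parameters (n,k,λ) (possibly trivial), and let B_D = Σ_{g∈D} B_g be the adjacency matrix of the graph Δ(D) = (Ω, s_D), where s_D = ∪_{g∈D} s_g. Then B_D² = kq·I + λq·(A_C − I) + (k²(q−1)/n)·(J − A_C). Consequently Δ(D) is a divisible design graph with parameters (n(q+1), kq, λq, k²(q−1)/n, q+1, n), whose classes are the q+1 lines Cα. -/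
open Classical Matrix

namespace Tatra
variable (F : Type) [Field F] [Fintype F] (K : Subgroup Fˣ)

abbrev NZ := {w : Fin 2 → F // w ≠ 0}

variable {F K}
set_option linter.unusedSectionVars false

lemma mk_eq {u v : NZ F} :
    Quotient.mk (ksetoid F K) u = Quotient.mk (ksetoid F K) v ↔
      ∃ x : Fˣ, x ∈ K ∧ (x : F) • u.1 = v.1 :=
  ⟨fun h => Quotient.exact h, fun h => Quotient.sound h⟩

def dtv (u v : Fin 2 → F) : F := u 0 * v 1 - u 1 * v 0

lemma dt_eq (u v : NZ F) : dt F u v = dtv u.1 v.1 := rfl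

lemma dtv_smul_left (c : F) (u v : Fin 2 → F) : dtv (c • u) v = c * dtv u v := by
  simp only [dtv, Pi.smul_apply, smul_eq_mul]; ring

lemma dtv_smul_right (c : F) (u v : Fin 2 → F) : dtv u (c • v) = c * dtv u v := by
  simp only [dtv, Pi.smul_apply, smul_eq_mul]; ring

lemma dtv_self (u : Fin 2 → F) : dtv u u = 0 := by simp only [dtv]; ring

lemma dtv_comm (u v : Fin 2 → F) : dtv u v = - dtv v u := by simp only [dtv]; ring

lemma dtv_lin_right (u x y : Fin 2 → F) (a b : F) :
    dtv u (a • x + b • y) = a * dtv u x + b * dtv u y := by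
  simp only [dtv, Pi.add_apply, Pi.smul_apply, smul_eq_mul]; ring

lemma dtv_lin_left (u x y : Fin 2 → F) (a b : F) :
    dtv (a • x + b • y) u = a * dtv x u + b * dtv y u := by
  simp only [dtv, Pi.add_apply, Pi.smul_apply, smul_eq_mul]; ring

lemma unit_smul_cancel {u : Fin 2 → F} (hu : u ≠ 0) {y y' : Fˣ}
    (h : (y : F) • u = (y' : F) • u) : y = y' := by
  obtain ⟨i, hi⟩ := Function.ne_iff.mp hu
  have := congrFun h i
  simp only [Pi.smul_apply, smul_eq_mul] at this
  exact Units.ext (mul_right_cancel₀ hi this)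

lemma exists_unit_smul {u v : Fin 2 → F} (hu : u ≠ 0) (hv : v ≠ 0) (h : dtv u v = 0) :
    ∃ c : Fˣ, (c : F) • u = v := by
  simp only [dtv, sub_eq_zero] at h
  by_cases h0 : u 0 = 0
  · have h1 : u 1 ≠ 0 := by
      intro h1; apply hu; funext i; fin_cases i <;> assumption
    have hv0 : v 0 = 0 := by
      have := h.symm; rw [h0, zero_mul] at this
      rcases mul_eq_zero.mp this with h' | h' ; exact absurd h' h1; exact h'
    have hv1 : v 1 ≠ 0 := by
      intro h1; apply hv; funext i; fin_cases i <;> assumption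
    refine ⟨Units.mk0 (v 1 / u 1) (div_ne_zero hv1 h1), ?_⟩
    funext i; fin_cases i
    · show (v 1 / u 1) * u 0 = v 0
      rw [h0, mul_zero, hv0]
    · show (v 1 / u 1) * u 1 = v 1
      field_simp
  · have hc : v 0 / u 0 ≠ 0 := by
      intro hc
      rcases div_eq_zero_iff.mp hc with h' | h'
      · have h2 := h; rw [h', mul_zero] at h2
        rcases mul_eq_zero.mp h2 with h'' | h''
        · exact h0 h''
        · exact hv (by funext i; fin_cases i <;> assumption)
      · exact h0 h'
    refine ⟨Units.mk0 (v 0 / u 0) hc, ?_⟩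
    funext i; fin_cases i
    · show (v 0 / u 0) * u 0 = v 0
      field_simp
    · show (v 0 / u 0) * u 1 = v 1
      field_simp
      rw [mul_comm (v 0) (u 1), ← h]

lemma srel_mk {g : CC F K} {u v : NZ F} :
    ((Quotient.mk (ksetoid F K) u, Quotient.mk (ksetoid F K) v) ∈ srel F K g) ↔
      ∃ y : Fˣ, (y : F) = dt F u v ∧ (QuotientGroup.mk y : CC F K) = g := by
  constructor
  · rintro ⟨u', v', y, hu, hv, hg, hy⟩
    obtain ⟨x, hx, hxu⟩ := Quotient.exact hu
    obtain ⟨x', hx', hxv⟩ := Quotient.exact hv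
    refine ⟨x * x' * y, ?_, ?_⟩
    · rw [dt_eq, ← hxu, ← hxv, dtv_smul_left, dtv_smul_right, ← dt_eq, ← hy]
      push_cast; ring
    · rw [← hg]
      refine QuotientGroup.eq.mpr ?_
      have h9 : (x * x' * y)⁻¹ * y = x⁻¹ * x'⁻¹ := Units.ext (by
        push_cast [Units.val_inv_eq_inv_val]
        field_simp)
      rw [h9]; exact K.mul_mem (K.inv_mem hx) (K.inv_mem hx')
  · rintro ⟨y, h1, h2⟩; exact ⟨u, v, y, rfl, rfl, h2, h1⟩

lemma rrel_mk {g : CC F K} {u v : NZ F} :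
    ((Quotient.mk (ksetoid F K) u, Quotient.mk (ksetoid F K) v) ∈ rrel F K g) ↔
      ∃ y : Fˣ, (y : F) • u.1 = v.1 ∧ (QuotientGroup.mk y : CC F K) = g := by
  constructor
  · rintro ⟨u', v', y, hu, hv, hg, hy⟩
    obtain ⟨x, hx, hxu⟩ := Quotient.exact hu
    obtain ⟨x', hx', hxv⟩ := Quotient.exact hv
    refine ⟨x' * y * x⁻¹, ?_, ?_⟩
    · rw [← hxu]
      rw [smul_smul]
      have : ((x' * y * x⁻¹ : Fˣ) : F) * (x : F) = (x' : F) * (y : F) := by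
        push_cast
        field_simp
      rw [this, ← smul_smul, hy, hxv]
    · rw [← hg]
      refine QuotientGroup.eq.mpr ?_
      have h9 : (x' * y * x⁻¹)⁻¹ * y = x * x'⁻¹ := Units.ext (by
        push_cast [Units.val_inv_eq_inv_val]
        field_simp)
      rw [h9]; exact K.mul_mem hx (K.inv_mem hx')
  · rintro ⟨y, h1, h2⟩; exact ⟨u, v, y, rfl, rfl, h2, h1⟩


section DPart
variable (D : Finset (CC F K))

def Pd (t : F) : Prop := ∃ y : Fˣ, (y : F) = t ∧ (QuotientGroup.mk y : CC F K) ∈ D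

lemma Pd_coe {y : Fˣ} : Pd D (y : F) ↔ (QuotientGroup.mk y : CC F K) ∈ D := by
  constructor
  · rintro ⟨y', h1, h2⟩
    rwa [show y' = y from Units.ext h1] at h2
  · exact fun h => ⟨y, rfl, h⟩

lemma Pd_zero : ¬ Pd D 0 := by rintro ⟨y, h1, -⟩; exact y.ne_zero h1

def BD (α β : Om F K) : Prop := ∃ g ∈ D, (α, β) ∈ srel F K g

lemma BD_mk {u v : NZ F} :
    BD D (Quotient.mk (ksetoid F K) u) (Quotient.mk (ksetoid F K) v) ↔ Pd D (dt F u v) := by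
  constructor
  · rintro ⟨g, hg, hs⟩
    obtain ⟨y, h1, h2⟩ := srel_mk.mp hs
    exact ⟨y, h1, h2 ▸ hg⟩
  · rintro ⟨y, h1, h2⟩
    exact ⟨QuotientGroup.mk y, h2, srel_mk.mpr ⟨y, h1, rfl⟩⟩

lemma Bsum_mk {u v : NZ F} :
    (∑ g ∈ D, Bmat F K g) (Quotient.mk (ksetoid F K) u) (Quotient.mk (ksetoid F K) v)
      = if Pd D (dt F u v) then 1 else 0 := by
  have hsum : (∑ g ∈ D, Bmat F K g) (Quotient.mk (ksetoid F K) u) (Quotient.mk (ksetoid F K) v)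
      = ∑ g ∈ D, (if ((Quotient.mk (ksetoid F K) u, Quotient.mk (ksetoid F K) v)) ∈ srel F K g
          then (1:ℤ) else 0) := by
    rw [Matrix.sum_apply]
    rfl
  rw [hsum]
  by_cases hP : Pd D (dt F u v)
  · obtain ⟨y₀, hval, hmem⟩ := hP
    have key : ∀ g : CC F K,
        ((Quotient.mk (ksetoid F K) u, Quotient.mk (ksetoid F K) v) ∈ srel F K g)
          ↔ g = QuotientGroup.mk y₀ := by
      intro g; rw [srel_mk]
      constructor
      · rintro ⟨y, h1, h2⟩
        rw [← h2]
        congr 1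
        exact Units.ext (by rw [h1, hval])
      · rintro rfl; exact ⟨y₀, hval, rfl⟩
    simp only [key]
    rw [Finset.sum_ite_eq' D (QuotientGroup.mk y₀) (fun _ => (1:ℤ))]
    rw [if_pos hmem, if_pos ⟨y₀, hval, hmem⟩]
  · rw [if_neg hP]
    refine Finset.sum_eq_zero fun g hg => ?_
    rw [if_neg]
    intro hs
    obtain ⟨y, h1, h2⟩ := srel_mk.mp hs
    exact hP ⟨y, h1, h2 ▸ hg⟩

end DPart

lemma AC_mk {u v : NZ F} :
    AC F K (Quotient.mk (ksetoid F K) u) (Quotient.mk (ksetoid F K) v)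
      = if (∃ c : Fˣ, (c : F) • u.1 = v.1) then 1 else 0 := by
  have hsum : AC F K (Quotient.mk (ksetoid F K) u) (Quotient.mk (ksetoid F K) v)
      = ∑ g : CC F K, (if ((Quotient.mk (ksetoid F K) u, Quotient.mk (ksetoid F K) v)) ∈ rrel F K g
          then (1:ℤ) else 0) := by
    rw [AC, Matrix.sum_apply]
    rfl
  rw [hsum]
  by_cases hP : ∃ c : Fˣ, (c : F) • u.1 = v.1
  · obtain ⟨c₀, hc₀⟩ := hP
    have key : ∀ g : CC F K,
        ((Quotient.mk (ksetoid F K) u, Quotient.mk (ksetoid F K) v) ∈ rrel F K g)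
          ↔ g = QuotientGroup.mk c₀ := by
      intro g; rw [rrel_mk]
      constructor
      · rintro ⟨y, h1, h2⟩
        rw [← h2]
        congr 1
        exact unit_smul_cancel u.2 (by rw [h1, hc₀])
      · rintro rfl; exact ⟨c₀, hc₀, rfl⟩
    simp only [key]
    rw [Finset.sum_ite_eq' Finset.univ (QuotientGroup.mk c₀) (fun _ => (1:ℤ))]
    rw [if_pos (Finset.mem_univ _), if_pos ⟨c₀, hc₀⟩]
  · rw [if_neg hP]
    refine Finset.sum_eq_zero fun g _ => ?_
    rw [if_neg]
    intro hs
    obtain ⟨y, h1, -⟩ := rrel_mk.mp hs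
    exact hP ⟨y, h1⟩

lemma line_mem {u v : NZ F} :
    (Quotient.mk (ksetoid F K) v ∈ line F K (Quotient.mk (ksetoid F K) u))
      ↔ ∃ c : Fˣ, (c : F) • u.1 = v.1 := by
  constructor
  · rintro ⟨g, hg⟩
    obtain ⟨y, h1, -⟩ := rrel_mk.mp hg
    exact ⟨y, h1⟩
  · rintro ⟨c, hc⟩
    exact ⟨QuotientGroup.mk c, rrel_mk.mpr ⟨c, hc, rfl⟩⟩

lemma par_symm {u v : NZ F} (h : ∃ c : Fˣ, (c : F) • u.1 = v.1) :
    ∃ c : Fˣ, (c : F) • v.1 = u.1 := by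
  obtain ⟨c, hc⟩ := h
  refine ⟨c⁻¹, ?_⟩
  rw [← hc, smul_smul, Units.val_inv_eq_inv_val, inv_mul_cancel₀ c.ne_zero, one_smul]

lemma par_trans {u v w : NZ F} (h1 : ∃ c : Fˣ, (c : F) • u.1 = v.1)
    (h2 : ∃ c : Fˣ, (c : F) • v.1 = w.1) : ∃ c : Fˣ, (c : F) • u.1 = w.1 := by
  obtain ⟨c, hc⟩ := h1
  obtain ⟨c', hc'⟩ := h2
  exact ⟨c' * c, by rw [Units.val_mul, mul_smul, hc, hc']⟩

lemma line_eq_iff {u v : NZ F} :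
    line F K (Quotient.mk (ksetoid F K) u) = line F K (Quotient.mk (ksetoid F K) v)
      ↔ ∃ c : Fˣ, (c : F) • u.1 = v.1 := by
  constructor
  · intro h
    have hm : Quotient.mk (ksetoid F K) v ∈ line F K (Quotient.mk (ksetoid F K) v) :=
      line_mem.mpr ⟨1, by simp⟩
    rw [← h] at hm
    exact line_mem.mp hm
  · intro hc
    ext β
    obtain ⟨w, rfl⟩ := Quotient.exists_rep β
    constructor
    · intro hw
      exact line_mem.mpr (par_trans (par_symm hc) (line_mem.mp hw))
    · intro hw
      exact line_mem.mpr (par_trans hc (line_mem.mp hw))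


end Tatra

lemma card_comp_eq {A B : Type} [Fintype A] [Fintype B] (f : A → B) (m : ℕ)
    (hm : ∀ b, Nat.card {a // f a = b} = m) (p : B → Prop) :
    Nat.card {a // p (f a)} = m * Nat.card {b // p b} := by
  classical
  rw [Nat.card_eq_fintype_card, Nat.card_eq_fintype_card, Fintype.card_subtype, Fintype.card_subtype]
  rw [Finset.card_eq_sum_card_fiberwise (f := f) (t := Finset.univ.filter p)
    (fun a ha => by simp only [Finset.mem_coe, Finset.mem_filter, Finset.mem_univ, true_and] at ha ⊢; exact ha)]
  have h : ∀ b ∈ Finset.univ.filter p,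
      ((Finset.univ.filter fun a => p (f a)).filter fun a => f a = b).card = m := by
    intro b hb
    simp only [Finset.mem_filter, Finset.mem_univ, true_and] at hb
    rw [← hm b, Nat.card_eq_fintype_card, Fintype.card_subtype]
    congr 1
    ext a
    simp only [Finset.mem_filter, Finset.mem_univ, true_and]
    exact ⟨fun h => h.2, fun h => ⟨h ▸ hb, h⟩⟩
  rw [Finset.sum_congr rfl h, Finset.sum_const, smul_eq_mul, mul_comm]

lemma card_eq_mul_ncard_range {A B : Type} [Fintype A] [Fintype B] (f : A → B) (m : ℕ)
    (hm : ∀ b ∈ Set.range f, Nat.card {a // f a = b} = m) :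
    Fintype.card A = m * (Set.range f).ncard := by
  classical
  rw [Set.ncard_eq_toFinset_card', Set.toFinset_range]
  rw [← Finset.card_univ, Finset.card_eq_sum_card_fiberwise (f := f) (t := Finset.univ.image f)
    (fun a _ => Finset.mem_image_of_mem f (Finset.mem_univ a))]
  have h : ∀ b ∈ Finset.univ.image f, (Finset.univ.filter fun a => f a = b).card = m := by
    intro b hb
    rw [← hm b (by simpa using hb), Nat.card_eq_fintype_card, Fintype.card_subtype]
  rw [Finset.sum_congr rfl h, Finset.sum_const, smul_eq_mul, mul_comm]

namespace Tatra
variable {F : Type} [Field F] [Fintype F] {K : Subgroup Fˣ}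
set_option linter.unusedSectionVars false

lemma card_fiber_mk (γ : Om F K) :
    Nat.card {w : NZ F // Quotient.mk (ksetoid F K) w = γ} = Nat.card K := by
  obtain ⟨u, rfl⟩ := Quotient.exists_rep γ
  refine (Nat.card_congr (Equiv.ofBijective
    (fun x : K => (⟨⟨((x : Fˣ) : F) • u.1, smul_ne_zero (Units.ne_zero _) u.2⟩,
      (mk_eq.mpr ⟨(x : Fˣ), x.2, rfl⟩).symm⟩ :
        {w : NZ F // Quotient.mk (ksetoid F K) w = Quotient.mk (ksetoid F K) u}))
    ⟨?_, ?_⟩)).symm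
  · intro x x' h
    have h2 : ((x : Fˣ) : F) • u.1 = ((x' : Fˣ) : F) • u.1 :=
      congrArg (fun a => a.1.1) h
    exact Subtype.ext (unit_smul_cancel u.2 h2)
  · rintro ⟨w, hw⟩
    obtain ⟨c, hc, hcw⟩ := mk_eq.mp hw
    refine ⟨(⟨c, hc⟩ : K)⁻¹, ?_⟩
    apply Subtype.ext
    apply Subtype.ext
    show ((((⟨c, hc⟩ : K)⁻¹ : K) : Fˣ) : F) • u.1 = w.1
    rw [← hcw, smul_smul]
    have hcoe : ((((⟨c, hc⟩ : K)⁻¹ : K) : Fˣ) : F) * (c : F) = 1 := by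
      have : (((⟨c, hc⟩ : K)⁻¹ : K) : Fˣ) = c⁻¹ := rfl
      rw [this, Units.val_inv_eq_inv_val, inv_mul_cancel₀ c.ne_zero]
    rw [hcoe, one_smul]

lemma card_fiber_mkCC (g : CC F K) :
    Nat.card {y : Fˣ // (QuotientGroup.mk y : CC F K) = g} = Nat.card K := by
  obtain ⟨y₀, rfl⟩ := QuotientGroup.mk_surjective g
  refine (Nat.card_congr (Equiv.ofBijective
    (fun x : K => (⟨y₀ * (x : Fˣ), QuotientGroup.eq.mpr
      ((show (y₀ * (x : Fˣ))⁻¹ * y₀ = ((x : Fˣ))⁻¹ by group) ▸ K.inv_mem x.2)⟩ :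
      {y : Fˣ // (QuotientGroup.mk y : CC F K) = QuotientGroup.mk y₀})) ⟨?_, ?_⟩)).symm
  · intro x x' h
    exact Subtype.ext (mul_left_cancel (congrArg Subtype.val h))
  · rintro ⟨y, hy⟩
    refine ⟨⟨y₀⁻¹ * y, QuotientGroup.eq.mp hy.symm⟩, ?_⟩
    exact Subtype.ext (by group)

lemma card_Pd (D : Finset (CC F K)) : Nat.card {t : F // Pd D t} = Nat.card K * D.card := by
  have e : {y : Fˣ // (QuotientGroup.mk y : CC F K) ∈ D} ≃ {t : F // Pd D t} := by
    refine Equiv.ofBijective (fun y => ⟨(y.1 : F), (Pd_coe D).mpr y.2⟩) ⟨?_, ?_⟩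
    · intro y y' h
      exact Subtype.ext (Units.ext (congrArg Subtype.val h))
    · rintro ⟨t, y, h1, h2⟩
      exact ⟨⟨y, h2⟩, Subtype.ext h1⟩
  rw [← Nat.card_congr e,
    card_comp_eq (QuotientGroup.mk : Fˣ → CC F K) (Nat.card K) card_fiber_mkCC (· ∈ D),
    Nat.card_eq_finsetCard]

lemma card_pairD {k l : ℕ} {D : Finset (CC F K)} (hk : D.card = k)
    (hDS : ∀ g : CC F K, g ≠ 1 →
      ((D ×ˢ D).filter (fun x : CC F K × CC F K => x.1 * x.2⁻¹ = g)).card = l)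
    (h : CC F K) :
    Nat.card {g : CC F K // g ∈ D ∧ h * g ∈ D} = if h = 1 then k else l := by
  classical
  split_ifs with h1
  · subst h1
    rw [Nat.card_congr (Equiv.subtypeEquivRight (q := (· ∈ D)) (fun g => by rw [show (1 : CC F K) * g = g from one_mul g, and_self])),
      Nat.card_eq_finsetCard, hk]
  · rw [Nat.card_eq_fintype_card, Fintype.card_subtype, ← hDS h h1]
    refine Finset.card_bij (fun g _ => (h * g, g)) ?_ ?_ ?_
    · intro a ha
      simp only [Finset.mem_filter, Finset.mem_univ, true_and] at ha
      simp only [Finset.mem_filter, Finset.mem_product]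
      exact ⟨⟨ha.2, ha.1⟩, mul_inv_cancel_right h a⟩
    · intro a _ a' _ hh
      exact (Prod.ext_iff.mp hh).2
    · rintro ⟨d1, d2⟩ hd
      simp only [Finset.mem_filter, Finset.mem_product] at hd
      have hd1 : h * d2 = d1 := by rw [← hd.2, inv_mul_cancel_right]
      refine ⟨d2, ?_, ?_⟩
      · simp only [Finset.mem_filter, Finset.mem_univ, true_and]
        exact ⟨hd.1.2, hd1 ▸ hd.1.1⟩
      · exact Prod.ext hd1 rfl

lemma exists_z {u : Fin 2 → F} (hu : u ≠ 0) : ∃ z : Fin 2 → F, dtv u z = 1 := by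
  by_cases h0 : u 0 = 0
  · have h1 : u 1 ≠ 0 := fun h => hu (funext fun i => by fin_cases i <;> assumption)
    refine ⟨![-(u 1)⁻¹, 0], ?_⟩
    simp only [dtv, Matrix.cons_val_zero, Matrix.cons_val_one, Matrix.head_cons]
    field_simp
    ring
  · refine ⟨![0, (u 0)⁻¹], ?_⟩
    simp only [dtv, Matrix.cons_val_zero, Matrix.cons_val_one, Matrix.head_cons]
    field_simp
    ring

lemma cramer_bij {u z : Fin 2 → F} (h : dtv u z = 1) :
    Function.Bijective (fun p : F × F => p.1 • u + p.2 • z) := by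
  rw [Fintype.bijective_iff_injective_and_card]
  constructor
  · intro p p' hpp
    have e2 := congrArg (dtv u) hpp
    rw [dtv_lin_right, dtv_lin_right, dtv_self, h] at e2
    simp only [mul_zero, mul_one, zero_add] at e2
    have e1 := congrArg (fun w => dtv w z) hpp
    simp only [dtv_lin_left, dtv_self, h, mul_one, mul_zero, add_zero] at e1
    exact Prod.ext e1 e2
  · classical
    rw [Fintype.card_prod, Fintype.card_fun, Fintype.card_fin, sq]

lemma count_cross (D : Finset (CC F K)) (u v : NZ F) (hd : dtv u.1 v.1 ≠ 0) :
    Nat.card {w : Fin 2 → F // Pd D (dtv u.1 w) ∧ Pd D (dtv w v.1)}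
      = (Nat.card K * D.card) * (Nat.card K * D.card) := by
  classical
  obtain ⟨z, hz⟩ := exists_z u.2
  let e : (F × F) ≃ (Fin 2 → F) :=
    Equiv.ofBijective (fun p : F × F => p.1 • u.1 + p.2 • z) (cramer_bij hz)
  have h1 : ∀ p : F × F, dtv u.1 (e p) = p.2 := by
    intro p
    show dtv u.1 (p.1 • u.1 + p.2 • z) = p.2
    rw [dtv_lin_right, dtv_self, hz]; ring
  have h2 : ∀ p : F × F, dtv (e p) v.1 = p.1 * dtv u.1 v.1 + p.2 * dtv z v.1 := by
    intro p
    show dtv (p.1 • u.1 + p.2 • z) v.1 = _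
    rw [dtv_lin_left]
  rw [← Nat.card_congr (Equiv.subtypeEquiv e (fun p => by rw [h1 p, h2 p]))]
  have hbij : Function.Bijective
      (fun p : F × F => (p.1 * dtv u.1 v.1 + p.2 * dtv z v.1, p.2)) := by
    rw [Fintype.bijective_iff_injective_and_card]
    refine ⟨?_, rfl⟩
    intro p p' hp
    simp only [Prod.mk.injEq] at hp
    obtain ⟨e1, e2⟩ := hp
    rw [e2] at e1
    have e3 : p.1 * dtv u.1 v.1 = p'.1 * dtv u.1 v.1 := by
      have := add_right_cancel e1; exact this
    exact Prod.ext (mul_right_cancel₀ hd e3) e2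
  let φ : (F × F) ≃ (F × F) := Equiv.ofBijective _ hbij
  rw [Nat.card_congr (Equiv.subtypeEquiv φ
    (p := fun p : F × F => Pd D p.2 ∧ Pd D (p.1 * dtv u.1 v.1 + p.2 * dtv z v.1))
    (q := fun p : F × F => Pd D p.2 ∧ Pd D p.1) (fun a => Iff.rfl))]
  rw [Nat.card_congr (Equiv.subtypeEquivRight
    (q := fun p : F × F => Pd D p.1 ∧ Pd D p.2) (fun p => and_comm))]
  rw [Nat.card_congr (Equiv.subtypeProdEquivProd
    (p := fun t : F => Pd D t) (q := fun t : F => Pd D t))]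
  rw [Nat.card_prod, card_Pd]

lemma count_par (D : Finset (CC F K)) (hK1 : (-1 : Fˣ) ∈ K) (u : NZ F) (c : Fˣ) :
    Nat.card {w : Fin 2 → F // Pd D (dtv u.1 w) ∧ Pd D (dtv w ((c : F) • u.1))}
      = Fintype.card F * (Nat.card K *
          Nat.card {g : CC F K // g ∈ D ∧ (QuotientGroup.mk c : CC F K) * g ∈ D}) := by
  classical
  obtain ⟨z, hz⟩ := exists_z u.2
  let e : (F × F) ≃ (Fin 2 → F) :=
    Equiv.ofBijective (fun p : F × F => p.1 • u.1 + p.2 • z) (cramer_bij hz)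
  have h1 : ∀ p : F × F, dtv u.1 (e p) = p.2 := by
    intro p
    show dtv u.1 (p.1 • u.1 + p.2 • z) = p.2
    rw [dtv_lin_right, dtv_self, hz]; ring
  have h2 : ∀ p : F × F, dtv (e p) ((c : F) • u.1) = p.2 * (-(c : F)) := by
    intro p
    show dtv (p.1 • u.1 + p.2 • z) ((c : F) • u.1) = _
    rw [dtv_lin_left, dtv_smul_right, dtv_smul_right, dtv_self, dtv_comm z u.1, hz]
    ring
  rw [← Nat.card_congr (Equiv.subtypeEquiv e (fun p => by rw [h1 p, h2 p]))]
  have e2 : {p : F × F // Pd D p.2 ∧ Pd D (p.2 * (-(c : F)))}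
      ≃ F × {b : F // Pd D b ∧ Pd D (b * (-(c : F)))} :=
    ⟨fun p => (p.1.1, ⟨p.1.2, p.2⟩), fun x => ⟨(x.1, x.2.1), x.2.2⟩,
      fun p => rfl, fun x => rfl⟩
  rw [Nat.card_congr e2, Nat.card_prod, Nat.card_eq_fintype_card]
  congr 1
  -- key : reduce Pd (b * -c) to coset condition
  have hkey : ∀ y : Fˣ, Pd D ((y : F) * (-(c : F)))
      ↔ (QuotientGroup.mk c : CC F K) * QuotientGroup.mk y ∈ D := by
    intro y
    have hval : (y : F) * (-(c : F)) = (((-c) * y : Fˣ) : F) := by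
      rw [Units.val_mul, Units.val_neg]; ring
    rw [hval, Pd_coe]
    have h3 : (QuotientGroup.mk ((-c) * y) : CC F K) = QuotientGroup.mk (c * y) := by
      refine QuotientGroup.eq.mpr ?_
      have h4 : ((-c) * y)⁻¹ * (c * y) = -1 := Units.ext (by
        push_cast [Units.val_inv_eq_inv_val, Units.val_neg]
        field_simp)
      rw [h4]; exact hK1
    rw [h3, QuotientGroup.mk_mul]
  have e3 : {y : Fˣ // (QuotientGroup.mk y : CC F K) ∈ D
        ∧ (QuotientGroup.mk c : CC F K) * QuotientGroup.mk y ∈ D}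
      ≃ {b : F // Pd D b ∧ Pd D (b * (-(c : F)))} := by
    refine Equiv.ofBijective
      (fun y => ⟨(y.1 : F), (Pd_coe D).mpr y.2.1, (hkey y.1).mpr y.2.2⟩) ⟨?_, ?_⟩
    · intro y y' h
      exact Subtype.ext (Units.ext (congrArg Subtype.val h))
    · rintro ⟨b, hb1, hb2⟩
      obtain ⟨y, hyb, hyD⟩ := hb1
      rw [← hyb] at hb2
      exact ⟨⟨y, hyD, (hkey y).mp hb2⟩, Subtype.ext hyb⟩
  rw [← Nat.card_congr e3]
  exact card_comp_eq (QuotientGroup.mk : Fˣ → CC F K) (Nat.card K) card_fiber_mkCC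
    (fun g => g ∈ D ∧ (QuotientGroup.mk c : CC F K) * g ∈ D)

lemma count_nz (D : Finset (CC F K)) (u v : NZ F) :
    Nat.card {w : NZ F // Pd D (dt F u w) ∧ Pd D (dt F w v)}
      = Nat.card {w : Fin 2 → F // Pd D (dtv u.1 w) ∧ Pd D (dtv w v.1)} := by
  have hne : ∀ w : Fin 2 → F, (Pd D (dtv u.1 w) ∧ Pd D (dtv w v.1)) → w ≠ 0 := by
    rintro w ⟨hw, -⟩ rfl
    have : dtv u.1 (0 : Fin 2 → F) = 0 := by simp [dtv]
    rw [this] at hw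
    exact Pd_zero D hw
  exact Nat.card_congr ⟨fun w => ⟨w.1.1, w.2⟩, fun w => ⟨⟨w.1, hne w.1 w.2⟩, w.2⟩,
    fun w => rfl, fun w => rfl⟩

lemma Bsum_apply (D : Finset (CC F K)) (α β : Om F K) :
    (∑ g ∈ D, Bmat F K g) α β = if BD D α β then 1 else 0 := by
  obtain ⟨u, rfl⟩ := Quotient.exists_rep α
  obtain ⟨v, rfl⟩ := Quotient.exists_rep β
  rw [Bsum_mk]
  exact if_congr (BD_mk D).symm rfl rfl

lemma entry_eq (D : Finset (CC F K)) (α β : Om F K) :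
    ((∑ g ∈ D, Bmat F K g) * (∑ g ∈ D, Bmat F K g)) α β
      = (Nat.card {γ : Om F K // BD D α γ ∧ BD D γ β} : ℤ) := by
  classical
  rw [Matrix.mul_apply]
  have h1 : ∀ γ : Om F K, (∑ g ∈ D, Bmat F K g) α γ * (∑ g ∈ D, Bmat F K g) γ β
      = if BD D α γ ∧ BD D γ β then (1:ℤ) else 0 := by
    intro γ
    rw [Bsum_apply, Bsum_apply]
    by_cases h1 : BD D α γ <;> by_cases h2 : BD D γ β <;> simp [h1, h2]
  rw [Finset.sum_congr rfl (fun γ _ => h1 γ), Finset.sum_boole,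
    Nat.card_eq_fintype_card, Fintype.card_subtype]

lemma count_main (D : Finset (CC F K)) (α β : Om F K) :
    Nat.card {w : NZ F // BD D α (Quotient.mk (ksetoid F K) w)
        ∧ BD D (Quotient.mk (ksetoid F K) w) β}
      = Nat.card K * Nat.card {γ : Om F K // BD D α γ ∧ BD D γ β} :=
  card_comp_eq (Quotient.mk (ksetoid F K)) (Nat.card K) card_fiber_mk
    (fun γ => BD D α γ ∧ BD D γ β)

lemma entry_cross (D : Finset (CC F K)) (u v : NZ F) (hd : dtv u.1 v.1 ≠ 0) :
    Nat.card {γ : Om F K // BD D (Quotient.mk (ksetoid F K) u) γ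
        ∧ BD D γ (Quotient.mk (ksetoid F K) v)}
      = D.card * D.card * Nat.card K := by
  apply Nat.eq_of_mul_eq_mul_left (Nat.card_pos (α := K))
  rw [← count_main]
  rw [Nat.card_congr (Equiv.subtypeEquivRight
    (q := fun w : NZ F => Pd D (dt F u w) ∧ Pd D (dt F w v))
    (fun w => and_congr (BD_mk D) (BD_mk D)))]
  rw [count_nz, count_cross D u v hd]
  ring

lemma entry_par (D : Finset (CC F K)) (hK1 : (-1 : Fˣ) ∈ K) (u v : NZ F) (c : Fˣ)
    (hc : (c : F) • u.1 = v.1) :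
    Nat.card {γ : Om F K // BD D (Quotient.mk (ksetoid F K) u) γ
        ∧ BD D γ (Quotient.mk (ksetoid F K) v)}
      = Fintype.card F
          * Nat.card {g : CC F K // g ∈ D ∧ (QuotientGroup.mk c : CC F K) * g ∈ D} := by
  apply Nat.eq_of_mul_eq_mul_left (Nat.card_pos (α := K))
  rw [← count_main]
  rw [Nat.card_congr (Equiv.subtypeEquivRight
    (q := fun w : NZ F => Pd D (dt F u w) ∧ Pd D (dt F w v))
    (fun w => and_congr (BD_mk D) (BD_mk D)))]
  rw [count_nz]
  have hv : v.1 = (c : F) • u.1 := hc.symm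
  rw [show {w : Fin 2 → F // Pd D (dtv u.1 w) ∧ Pd D (dtv w v.1)}
      = {w : Fin 2 → F // Pd D (dtv u.1 w) ∧ Pd D (dtv w ((c : F) • u.1))} from by rw [← hv]]
  rw [count_par D hK1 u c]
  ring

lemma AC_apply (α β : Om F K) :
    AC F K α β = if line F K α = line F K β then 1 else 0 := by
  obtain ⟨u, rfl⟩ := Quotient.exists_rep α
  obtain ⟨v, rfl⟩ := Quotient.exists_rep β
  rw [AC_mk]
  exact if_congr line_eq_iff.symm rfl rfl

lemma line_count (α : Om F K) :
    Nat.card K * (line F K α).ncard = Fintype.card Fˣ := by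
  obtain ⟨u, rfl⟩ := Quotient.exists_rep α
  let f : Fˣ → Om F K := fun y =>
    Quotient.mk (ksetoid F K) ⟨(y : F) • u.1, smul_ne_zero (Units.ne_zero y) u.2⟩
  have hrange : Set.range f = line F K (Quotient.mk (ksetoid F K) u) := by
    ext β
    obtain ⟨w, rfl⟩ := Quotient.exists_rep β
    constructor
    · rintro ⟨y, hy⟩
      obtain ⟨x, hx, hxw⟩ := mk_eq.mp hy
      exact line_mem.mpr ⟨x * y, by rw [Units.val_mul, mul_smul]; exact hxw⟩
    · intro hw
      obtain ⟨cc, hcc⟩ := line_mem.mp hw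
      exact ⟨cc, mk_eq.mpr ⟨1, K.one_mem, by rw [Units.val_one, _root_.one_smul]; exact hcc⟩⟩
  have hfib : ∀ β ∈ Set.range f, Nat.card {y : Fˣ // f y = β} = Nat.card K := by
    rintro β ⟨y₀, rfl⟩
    refine (Nat.card_congr (Equiv.ofBijective
      (fun x : K => (⟨((x : Fˣ))⁻¹ * y₀, mk_eq.mpr ⟨(x : Fˣ), x.2, by
        rw [smul_smul, ← Units.val_mul, mul_inv_cancel_left]⟩⟩ :
          {y : Fˣ // f y = f y₀})) ⟨?_, ?_⟩)).symm
    · intro x x' h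
      have := congrArg Subtype.val h
      exact Subtype.ext (inv_injective (mul_right_cancel this))
    · rintro ⟨y, hy⟩
      obtain ⟨x, hx, hxy⟩ := mk_eq.mp hy
      rw [smul_smul, ← Units.val_mul] at hxy
      have hxy2 : x * y = y₀ := unit_smul_cancel u.2 hxy
      refine ⟨⟨x, hx⟩, Subtype.ext ?_⟩
      show ((x : Fˣ))⁻¹ * y₀ = y
      rw [← hxy2, inv_mul_cancel_left]
  have h := card_eq_mul_ncard_range f (Nat.card K) hfib
  rw [hrange] at h
  exact h.symm

lemma om_count : Nat.card K * Fintype.card (Om F K)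
    = Fintype.card F ^ 2 - 1 := by
  classical
  have h := card_eq_mul_ncard_range (Quotient.mk (ksetoid F K) : NZ F → Om F K)
    (Nat.card K) (fun b _ => card_fiber_mk b)
  have hr : Set.range (Quotient.mk (ksetoid F K) : NZ F → Om F K) = Set.univ :=
    Set.range_eq_univ.mpr (fun γ => Quotient.exists_rep γ)
  rw [hr, Set.ncard_univ] at h
  have hNZ : Fintype.card (NZ F) = Fintype.card F ^ 2 - 1 := by
    rw [Fintype.card_subtype]
    have : Finset.filter (fun w : Fin 2 → F => w ≠ 0) Finset.univ
        = Finset.univ.erase 0 := by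
      ext w; simp [Finset.mem_erase, and_comm]
    rw [this, Finset.card_erase_of_mem (Finset.mem_univ 0), Finset.card_univ,
      Fintype.card_fun, Fintype.card_fin]
  rw [hNZ] at h
  rw [← Nat.card_eq_fintype_card (α := Om F K)]
  exact h.symm


end Tatra

open Tatra in
/-- if `D ⊆ C` is a difference set with parameters `(n,k,λ)`, then
`B_D² = kq·I + λq·(A_C − I) + (k²(q−1)/n)·(J − A_C)`; consequently `Δ(D)` is a divisible
design graph with parameters `(n(q+1), kq, λq, k²(q−1)/n, q+1, n)` whose classes are
the `q+1` lines `Cα`, each of size `n`. -/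
theorem stmt_19 (F : Type) [Field F] [Fintype F] (K : Subgroup Fˣ) (q n : ℕ)
    (hq : Fintype.card F = q) (hn : K.index = n) (hnd : n ∣ q - 1)
    (heven : Even (q * ((q - 1) / n)))
    (k l : ℕ) (D : Finset (CC F K)) (hk : D.card = k)
    (hDS : ∀ g : CC F K, g ≠ 1 →
      ((D ×ˢ D).filter (fun x : CC F K × CC F K => x.1 * x.2⁻¹ = g)).card = l) :
    (∑ g ∈ D, Bmat F K g) * (∑ g ∈ D, Bmat F K g)
      = ((k * q : ℕ) : ℤ) • (1 : Matrix (Om F K) (Om F K) ℤ)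
        + ((l * q : ℕ) : ℤ) • (AC F K - 1)
        + ((k ^ 2 * ((q - 1) / n) : ℕ) : ℤ) • (Jmat F K - AC F K) ∧
    (∀ α β : Om F K, AC F K α β = if line F K α = line F K β then 1 else 0) ∧
    (Set.range (line F K)).ncard = q + 1 ∧
    (∀ α : Om F K, (line F K α).ncard = n) := by
  classical
  have hq2 : 2 ≤ q := by rw [← hq]; exact Fintype.one_lt_card
  have hmn : Nat.card K * n = q - 1 := by
    have h1 := Subgroup.card_mul_index K
    rw [hn] at h1
    have h2 : Nat.card Fˣ = q - 1 := by
      rw [Nat.card_eq_fintype_card, Fintype.card_units, hq]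
    rw [h2] at h1; exact h1
  have hm0pos : 0 < Nat.card K := Nat.card_pos
  have hnpos : 0 < n := by
    rcases Nat.eq_zero_or_pos n with h | h
    · exfalso; rw [h, Nat.mul_zero] at hmn; omega
    · exact h
  have hdiv : (q - 1) / n = Nat.card K := by rw [← hmn, Nat.mul_div_cancel _ hnpos]
  have hK1 : (-1 : Fˣ) ∈ K := by
    rw [hdiv] at heven
    rcases Nat.even_mul.mp heven with hq' | hm'
    · have hodd : Odd (Fintype.card Fˣ) := by
        rw [Fintype.card_units, hq]
        exact Nat.Even.sub_odd (by omega) hq' odd_one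
      have hsq : (-1 : Fˣ) ^ 2 = 1 := Units.ext (by push_cast; ring)
      have hdvd2 : orderOf (-1 : Fˣ) ∣ 2 := orderOf_dvd_of_pow_eq_one hsq
      have hdvdc : orderOf (-1 : Fˣ) ∣ Fintype.card Fˣ := orderOf_dvd_card
      have h1 : orderOf (-1 : Fˣ) = 1 := by
        rcases (Nat.dvd_prime Nat.prime_two).mp hdvd2 with h | h
        · exact h
        · exfalso
          rw [h] at hdvdc
          exact (Nat.not_even_iff_odd.mpr hodd) ((even_iff_two_dvd).mpr hdvdc)
      rw [orderOf_eq_one_iff.mp h1]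
      exact K.one_mem
    · haveI : Fact (Nat.Prime 2) := ⟨Nat.prime_two⟩
      haveI : Fintype K := Fintype.ofFinite _
      have h2 : (2 : ℕ) ∣ Fintype.card K := by
        rw [← Nat.card_eq_fintype_card]; exact hm'.two_dvd
      obtain ⟨x, hx⟩ := exists_prime_orderOf_dvd_card 2 h2
      have hx2 : x ^ 2 = 1 := by rw [← hx]; exact pow_orderOf_eq_one x
      have hx1 : x ≠ 1 := by
        intro h; rw [h, orderOf_one] at hx; omega
      have hv : ((x : Fˣ) : F) ^ 2 = 1 := by
        have h5 := congrArg (fun t : K => ((t : Fˣ) : F)) hx2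
        push_cast at h5
        exact h5
      have hfac : (((x : Fˣ) : F) - 1) * (((x : Fˣ) : F) + 1) = 0 := by
        linear_combination hv
      have hveq : ((x : Fˣ) : F) = -1 := by
        rcases mul_eq_zero.mp hfac with h | h
        · exact absurd (Subtype.ext (Units.ext (sub_eq_zero.mp h))) hx1
        · exact eq_neg_of_add_eq_zero_left h
      have hxu : (x : Fˣ) = -1 := Units.ext (by rw [hveq, Units.val_neg, Units.val_one])
      rw [← hxu]
      exact x.2
  have hline : ∀ α : Om F K, (line F K α).ncard = n := by
    intro α
    have h := line_count (K := K) α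
    rw [Fintype.card_units, hq] at h
    exact Nat.eq_of_mul_eq_mul_left hm0pos (h.trans hmn.symm)
  refine ⟨?_, ?_, ?_, hline⟩
  · ext α β
    obtain ⟨u, rfl⟩ := Quotient.exists_rep α
    obtain ⟨v, rfl⟩ := Quotient.exists_rep β
    rw [entry_eq]
    simp only [Matrix.add_apply, Matrix.smul_apply, Matrix.sub_apply, Matrix.one_apply,
      Jmat, Matrix.of_apply, AC_mk, smul_eq_mul]
    by_cases hd : dtv u.1 v.1 = 0
    · obtain ⟨c, hc⟩ := exists_unit_smul u.2 v.2 hd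
      have hACone : ∃ c : Fˣ, (c : F) • u.1 = v.1 := ⟨c, hc⟩
      rw [if_pos hACone]
      rw [entry_par D hK1 u v c hc, card_pairD hk hDS (QuotientGroup.mk c), hq]
      by_cases hc1 : (QuotientGroup.mk c : CC F K) = 1
      · have hab : Quotient.mk (ksetoid F K) u = Quotient.mk (ksetoid F K) v :=
          mk_eq.mpr ⟨c, (QuotientGroup.eq_one_iff c).mp hc1, hc⟩
        rw [if_pos hab, if_pos hc1]
        push_cast; ring
      · have hab : ¬(Quotient.mk (ksetoid F K) u = Quotient.mk (ksetoid F K) v) := by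
          intro h
          obtain ⟨x, hx, hxv⟩ := mk_eq.mp h
          have hxc : x = c := unit_smul_cancel u.2 (hxv.trans hc.symm)
          exact hc1 ((QuotientGroup.eq_one_iff c).mpr (hxc ▸ hx))
        rw [if_neg hab, if_neg hc1]
        push_cast; ring
    · have hACzero : ¬(∃ c : Fˣ, (c : F) • u.1 = v.1) := by
        rintro ⟨c, hc⟩
        apply hd
        rw [← hc, dtv_smul_right, dtv_self, mul_zero]
      have hab : ¬(Quotient.mk (ksetoid F K) u = Quotient.mk (ksetoid F K) v) := by
        intro h
        obtain ⟨x, hx, h2⟩ := mk_eq.mp h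
        exact hACzero ⟨x, h2⟩
      rw [if_neg hACzero, if_neg hab]
      rw [entry_cross D u v hd, hk, hdiv]
      push_cast; ring
  · exact fun α β => AC_apply α β
  · have hfib : ∀ s ∈ Set.range (line F K), Nat.card {α : Om F K // line F K α = s} = n := by
      rintro s ⟨α₀, rfl⟩
      have hiff : ∀ α : Om F K, line F K α = line F K α₀ ↔ α ∈ line F K α₀ := by
        intro α
        obtain ⟨u, rfl⟩ := Quotient.exists_rep α
        obtain ⟨u₀, rfl⟩ := Quotient.exists_rep α₀
        constructor
        · intro h; exact line_mem.mpr (par_symm (line_eq_iff.mp h))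
        · intro h; exact line_eq_iff.mpr (par_symm (line_mem.mp h))
      calc Nat.card {α : Om F K // line F K α = line F K α₀}
          = Nat.card {α : Om F K // α ∈ line F K α₀} :=
            Nat.card_congr (Equiv.subtypeEquivRight hiff)
        _ = (line F K α₀).ncard := Nat.card_coe_set_eq _
        _ = n := hline α₀
    have h := card_eq_mul_ncard_range (line F K) n hfib
    have h2 := om_count (F := F) (K := K)
    rw [hq, h] at h2
    have e1 : (q - 1) * (Set.range (line F K)).ncard = q ^ 2 - 1 := by
      rw [← hmn, mul_assoc]; exact h2
    have e2 : (q - 1) * (q + 1) = q ^ 2 - 1 := by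
      have h3 : q * (q + 1) = q * q + q := by ring
      have h4 : q ^ 2 = q * q := sq q
      rw [Nat.sub_mul, _root_.one_mul, h3, h4]
      generalize q * q = a
      omega
    have e3 : (q - 1) * (Set.range (line F K)).ncard = (q - 1) * (q + 1) := by
      rw [e1, e2]
    exact Nat.eq_of_mul_eq_mul_left (by omega) e3
end
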